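/- arXiv:1501.02952 — 2 statements merged into one kernel-verified Lean document; each statement's English description precedes it below -/
import Mathlib

section
/- The operator 𝕂* has empty point spectrum: if f ∈ W* and λ ∈ ℂ satisfy 𝕂*f = λf, then f = 0. (Hence, since 𝕂* is unitarily equivalent to the Neumann–Poincaré operator on the intersecting disks, the latter has no eigenvalues on H₀^{−1/2}.) -/
open Real Filter Topology Set MeasureTheory
open scoped ComplexInnerProductSpace

/-- The weight `p₁`. -/
noncomputable def p1 (θ₀ : ℝ) (s : ℝ) : ℝ :=
  if s = 0 then θ₀ * (π - θ₀) / π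
  else Real.sinh (s * θ₀) * Real.sinh (s * (π - θ₀)) / (s * Real.sinh (s * π))

/-- The weight `p₂`. -/
noncomputable def p2 (θ₀ : ℝ) (s : ℝ) : ℝ :=
  Real.cosh (s * θ₀) * Real.cosh (s * (π - θ₀)) / (s * Real.sinh (s * π))

/-- The symbol `η`. -/
noncomputable def eta (θ₀ : ℝ) (s : ℝ) : ℝ :=
  if s = 0 then 1 / 2 - θ₀ / π
  else Real.sinh (s * (π - 2 * θ₀)) / (2 * Real.sinh (s * π))

/-- The measure `p₁(s) ds`. -/
noncomputable def mu1 (θ₀ : ℝ) : Measure ℝ :=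
  (volume : Measure ℝ).withDensity fun s => ENNReal.ofReal (p1 θ₀ s)

/-- The measure `p₂(s) ds`. -/
noncomputable def mu2 (θ₀ : ℝ) : Measure ℝ :=
  (volume : Measure ℝ).withDensity fun s => ENNReal.ofReal (p2 θ₀ s)

/-- The Hilbert space `W* = L²(ℝ, p₁ ds) ⊕ L²(ℝ, p₂ ds)` (ℓ²-direct sum). -/
noncomputable abbrev WStar (θ₀ : ℝ) :=
  WithLp 2 (Lp ℂ 2 (mu1 θ₀) × Lp ℂ 2 (mu2 θ₀))

/-- First component of an element of `W*`. -/
noncomputable def comp1 {θ₀ : ℝ} (f : WStar θ₀) : Lp ℂ 2 (mu1 θ₀) :=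
  (WithLp.equiv 2 (Lp ℂ 2 (mu1 θ₀) × Lp ℂ 2 (mu2 θ₀)) f).1

/-- Second component of an element of `W*`. -/
noncomputable def comp2 {θ₀ : ℝ} (f : WStar θ₀) : Lp ℂ 2 (mu2 θ₀) :=
  (WithLp.equiv 2 (Lp ℂ 2 (mu1 θ₀) × Lp ℂ 2 (mu2 θ₀)) f).2

/-- `T` acts as `𝕂*(f₁, f₂) = (η·f₁, −η·f₂)`. -/
def IsNPMult (θ₀ : ℝ) (T : WStar θ₀ →L[ℂ] WStar θ₀) : Prop :=
  ∀ f : WStar θ₀,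
    (comp1 (T f) : ℝ → ℂ) =ᵐ[mu1 θ₀] (fun s => (eta θ₀ s : ℂ) * (comp1 f : ℝ → ℂ) s) ∧
    (comp2 (T f) : ℝ → ℂ) =ᵐ[mu2 θ₀] (fun s => -(eta θ₀ s : ℂ) * (comp2 f : ℝ → ℂ) s)



section Helpers

private lemma aux_sinh_lt_mul_cosh {x : ℝ} (hx : 0 < x) : Real.sinh x < x * Real.cosh x := by
  have hmono : StrictMonoOn (fun x => x * Real.cosh x - Real.sinh x) (Ici 0) := by
    apply strictMonoOn_of_deriv_pos (convex_Ici 0)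
    · fun_prop
    · intro y hy
      rw [interior_Ici] at hy
      have hd : HasDerivAt (fun x => x * Real.cosh x - Real.sinh x)
          (1 * Real.cosh y + y * Real.sinh y - Real.cosh y) y :=
        ((hasDerivAt_id y).mul (Real.hasDerivAt_cosh y)).sub (Real.hasDerivAt_sinh y)
      rw [hd.deriv]
      have hy' : (0:ℝ) < y := hy
      have := Real.sinh_pos_iff.2 hy'
      nlinarith [mul_pos hy' this]
  have := hmono (self_mem_Ici) (le_of_lt hx : (0:ℝ) ≤ x) hx
  simpa using this

private lemma aux_sinh_div_strictMono : StrictMonoOn (fun x => Real.sinh x / x) (Ioi 0) := by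
  apply strictMonoOn_of_deriv_pos (convex_Ioi 0)
  · exact ContinuousOn.div (by fun_prop) (by fun_prop) (fun x hx => ne_of_gt hx)
  · intro x hx
    rw [interior_Ioi] at hx
    have hd : HasDerivAt (fun x => Real.sinh x / x)
        ((Real.cosh x * x - Real.sinh x * 1) / x ^ 2) x :=
      (Real.hasDerivAt_sinh x).div (hasDerivAt_id x) (ne_of_gt hx)
    rw [hd.deriv]
    have h1 := aux_sinh_lt_mul_cosh hx
    have hx' : (0:ℝ) < x := hx
    have h2 : (0:ℝ) < x ^ 2 := pow_pos hx' 2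
    exact div_pos (by nlinarith) h2

private lemma aux_key_B {u v : ℝ} (hu : 0 < u) (huv : u < v) :
    u * (Real.cosh u * Real.sinh v) < v * (Real.sinh u * Real.cosh v) := by
  have h1 : (0:ℝ) < v - u := by linarith
  have h2 : v - u < v + u := by linarith
  have hA := aux_sinh_div_strictMono (mem_Ioi.2 h1) (mem_Ioi.2 (by linarith : (0:ℝ) < v + u)) h2
  simp only at hA
  rw [div_lt_div_iff₀ (by linarith) (by linarith)] at hA
  rw [Real.sinh_sub, Real.sinh_add] at hA
  nlinarith

private lemma aux_key_K {a b : ℝ} (ha : 0 < a) (hab : a < b) :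
    StrictAntiOn (fun s => Real.sinh (s * a) / Real.sinh (s * b)) (Ioi 0) := by
  have hb : 0 < b := lt_trans ha hab
  apply strictAntiOn_of_deriv_neg (convex_Ioi 0)
  · exact ContinuousOn.div (by fun_prop) (by fun_prop)
      (fun s hs => ne_of_gt (Real.sinh_pos_iff.2 (mul_pos hs hb)))
  · intro s hs
    rw [interior_Ioi] at hs
    have hs' : (0:ℝ) < s := hs
    have hsb : 0 < Real.sinh (s*b) := Real.sinh_pos_iff.2 (mul_pos hs' hb)
    have hda : HasDerivAt (fun s => Real.sinh (s * a)) (Real.cosh (s*a) * a) s := by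
      simpa using (hasDerivAt_mul_const a).sinh
    have hdb : HasDerivAt (fun s => Real.sinh (s * b)) (Real.cosh (s*b) * b) s := by
      simpa using (hasDerivAt_mul_const b).sinh
    have hd := hda.div hdb (ne_of_gt hsb)
    rw [(show HasDerivAt (fun s => Real.sinh (s * a) / Real.sinh (s * b)) _ s from hd).deriv]
    apply div_neg_of_neg_of_pos _ (pow_pos hsb 2)
    have hB := aux_key_B (mul_pos hs' ha) (by nlinarith : s * a < s * b)
    nlinarith

private lemma aux_eta_even (θ₀ s : ℝ) : eta θ₀ (-s) = eta θ₀ s := by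
  unfold eta
  rcases eq_or_ne s 0 with h | h
  · simp [h]
  · rw [if_neg (neg_ne_zero.2 h), if_neg h, neg_mul, neg_mul, Real.sinh_neg, Real.sinh_neg,
      show (2 : ℝ) * -Real.sinh (s*π) = -(2*Real.sinh (s*π)) by ring, neg_div_neg_eq]

private lemma aux_eta_anti (θ₀ : ℝ) (h0 : 0 < θ₀) (h1 : θ₀ < π / 2) :
    StrictAntiOn (eta θ₀) (Ioi 0) := by
  have hpi : (0:ℝ) < π := Real.pi_pos
  have ha : (0:ℝ) < π - 2 * θ₀ := by linarith
  have hK := aux_key_K ha (by linarith : π - 2*θ₀ < π)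
  intro s hs t ht hst
  have hs' : (0:ℝ) < s := hs
  have ht' : (0:ℝ) < t := ht
  have h2 := hK hs ht hst
  simp only [eta, if_neg (ne_of_gt hs'), if_neg (ne_of_gt ht')]
  have e1 : Real.sinh (t * (π - 2*θ₀)) / (2 * Real.sinh (t*π))
      = (Real.sinh (t * (π - 2*θ₀)) / Real.sinh (t*π)) / 2 := by ring
  have e2 : Real.sinh (s * (π - 2*θ₀)) / (2 * Real.sinh (s*π))
      = (Real.sinh (s * (π - 2*θ₀)) / Real.sinh (s*π)) / 2 := by ring
  rw [e1, e2]
  simp only at h2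
  linarith

private lemma aux_eta_level_null (θ₀ : ℝ) (h0 : 0 < θ₀) (h1 : θ₀ < π / 2) (c : ℝ) :
    MeasureTheory.volume {s : ℝ | eta θ₀ s = c} = 0 := by
  set P := {s : ℝ | eta θ₀ s = c} ∩ Ioi 0 with hP
  have hPsub : P.Subsingleton := by
    intro x hx y hy
    exact (aux_eta_anti θ₀ h0 h1).injOn hx.2 hy.2 (hx.1.trans hy.1.symm)
  have hsub : {s : ℝ | eta θ₀ s = c} ⊆ ({0} : Set ℝ) ∪ P ∪ (Neg.neg '' P) := by
    intro s hs
    rcases lt_trichotomy s 0 with h | h | h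
    · right
      exact ⟨-s, ⟨by simpa [aux_eta_even] using hs, by simpa using h⟩, by simp⟩
    · left; left; exact h
    · left; right; exact ⟨hs, h⟩
  refine MeasureTheory.measure_mono_null hsub (Set.Countable.measure_zero ?_ _)
  exact ((countable_singleton 0).union hPsub.countable).union (hPsub.countable.image _)

end Helpers

/-- `𝕂*` has empty point spectrum: if `𝕂* f = λ f` for some `f ∈ W*` and
`λ ∈ ℂ`, then `f = 0`. -/
theorem statement11 (θ₀ : ℝ) (h0 : 0 < θ₀) (h1 : θ₀ < π / 2)
    (T : WStar θ₀ →L[ℂ] WStar θ₀) (hT : IsNPMult θ₀ T)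
    (f : WStar θ₀) (l : ℂ) (hf : T f = l • f) :
    f = 0 := by
  obtain ⟨e1, e2⟩ := hT f
  have hc1 : comp1 (T f) = l • comp1 f := by rw [hf]; rfl
  have hc2 : comp2 (T f) = l • comp2 f := by rw [hf]; rfl
  -- component 1
  have heq1 : ∀ᵐ s ∂(mu1 θ₀),
      (eta θ₀ s : ℂ) * (comp1 f : ℝ → ℂ) s = l * (comp1 f : ℝ → ℂ) s := by
    have hs1 : (comp1 (T f) : ℝ → ℂ) =ᵐ[mu1 θ₀] fun s => l * (comp1 f : ℝ → ℂ) s := by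
      rw [hc1]
      filter_upwards [MeasureTheory.Lp.coeFn_smul l (comp1 f)] with s hs
      simpa using hs
    filter_upwards [e1, hs1] with s h1 h2
    rw [← h1, h2]
  have hnull1 : mu1 θ₀ {s : ℝ | (eta θ₀ s : ℂ) = l} = 0 := by
    apply MeasureTheory.withDensity_absolutelyContinuous (volume : MeasureTheory.Measure ℝ) _
    refine MeasureTheory.measure_mono_null (fun s hs => ?_) (aux_eta_level_null θ₀ h0 h1 l.re)
    have : ((eta θ₀ s : ℂ)).re = l.re := by rw [hs]
    simpa using this
  have hae1 : ∀ᵐ s ∂(mu1 θ₀), (eta θ₀ s : ℂ) ≠ l := by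
    rw [MeasureTheory.ae_iff]
    simpa only [ne_eq, not_not] using hnull1
  have hz1 : (comp1 f : ℝ → ℂ) =ᵐ[mu1 θ₀] 0 := by
    filter_upwards [heq1, hae1] with s h hne
    have hsub : ((eta θ₀ s : ℂ) - l) * (comp1 f : ℝ → ℂ) s = 0 := by
      rw [sub_mul, h, sub_self]
    rcases mul_eq_zero.1 hsub with h' | h'
    · exact absurd (sub_eq_zero.1 h') hne
    · exact h'
  have hcomp1 : comp1 f = 0 := MeasureTheory.Lp.eq_zero_iff_ae_eq_zero.2 hz1
  -- component 2
  have heq2 : ∀ᵐ s ∂(mu2 θ₀),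
      -(eta θ₀ s : ℂ) * (comp2 f : ℝ → ℂ) s = l * (comp2 f : ℝ → ℂ) s := by
    have hs2 : (comp2 (T f) : ℝ → ℂ) =ᵐ[mu2 θ₀] fun s => l * (comp2 f : ℝ → ℂ) s := by
      rw [hc2]
      filter_upwards [MeasureTheory.Lp.coeFn_smul l (comp2 f)] with s hs
      simpa using hs
    filter_upwards [e2, hs2] with s h1 h2
    rw [← h1, h2]
  have hnull2 : mu2 θ₀ {s : ℝ | -(eta θ₀ s : ℂ) = l} = 0 := by
    apply MeasureTheory.withDensity_absolutelyContinuous (volume : MeasureTheory.Measure ℝ) _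
    refine MeasureTheory.measure_mono_null (fun s hs => ?_)
      (aux_eta_level_null θ₀ h0 h1 (-l.re))
    have : ((-(eta θ₀ s : ℂ))).re = l.re := by rw [hs]
    have h2 : -(eta θ₀ s) = l.re := by simpa using this
    show eta θ₀ s = -l.re
    linarith
  have hae2 : ∀ᵐ s ∂(mu2 θ₀), -(eta θ₀ s : ℂ) ≠ l := by
    rw [MeasureTheory.ae_iff]
    simpa only [ne_eq, not_not] using hnull2
  have hz2 : (comp2 f : ℝ → ℂ) =ᵐ[mu2 θ₀] 0 := by
    filter_upwards [heq2, hae2] with s h hne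
    have hsub : (-(eta θ₀ s : ℂ) - l) * (comp2 f : ℝ → ℂ) s = 0 := by
      rw [sub_mul, h, sub_self]
    rcases mul_eq_zero.1 hsub with h' | h'
    · exact absurd (sub_eq_zero.1 h') hne
    · exact h'
  have hcomp2 : comp2 f = 0 := MeasureTheory.Lp.eq_zero_iff_ae_eq_zero.2 hz2
  -- conclude
  apply (WithLp.equiv 2 (Lp ℂ 2 (mu1 θ₀) × Lp ℂ 2 (mu2 θ₀))).injective
  apply Prod.ext
  · simpa [comp1] using hcomp1
  · simpa [comp2] using hcomp2
end

section
/- Absolute continuity of the spectral measure: let f, g ∈ W* have continuous components f₁, f₂, g₁, g₂ on ℝ. Then the function t ↦ ⟨f, E_t[g]⟩_{W*} is differentiable at every t ∈ (−b, 0) ∪ (0, b), with derivative equal to p₁(s)/(2|η'(s)|) · [f₁(s)·conj(g₁(s)) + f₁(−s)·conj(g₁(−s))] for t ∈ (0, b) where s = σ(t), and equal to p₂(s)/(2|η'(s)|) · [f₂(s)·conj(g₂(s)) + f₂(−s)·conj(g₂(−s))] for t ∈ (−b, 0) where s = σ(−t). -/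
open Real Filter Topology Set MeasureTheory

lemma sinh_lt_mul_cosh {y : ℝ} (hy : 0 < y) : Real.sinh y < y * Real.cosh y := by
  have key : StrictMonoOn (fun x : ℝ => x * Real.cosh x - Real.sinh x) (Ici 0) := by
    apply strictMonoOn_of_deriv_pos (convex_Ici 0)
    · exact ((continuous_id.mul Real.continuous_cosh).sub Real.continuous_sinh).continuousOn
    · intro x hx
      rw [interior_Ici, mem_Ioi] at hx
      have hd : HasDerivAt (fun x : ℝ => x * Real.cosh x - Real.sinh x)
          (1 * Real.cosh x + x * Real.sinh x - Real.cosh x) x :=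
        ((hasDerivAt_id x).mul (Real.hasDerivAt_cosh x)).sub (Real.hasDerivAt_sinh x)
      rw [hd.deriv]
      have := Real.sinh_pos_iff.2 hx
      nlinarith
  have := key (le_refl (0:ℝ)) hy.le hy
  simpa using this

lemma mul_sinh_lt {a b : ℝ} (ha : 0 < a) (hab : a < b) : b * Real.sinh a < a * Real.sinh b := by
  have hb : 0 < b := ha.trans hab
  have key : StrictMonoOn (fun x : ℝ => a * Real.sinh x - x * Real.sinh a) (Ici a) := by
    apply strictMonoOn_of_deriv_pos (convex_Ici a)
    · exact ((continuous_const.mul Real.continuous_sinh).sub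
        (continuous_id.mul continuous_const)).continuousOn
    · intro x hx
      rw [interior_Ici, mem_Ioi] at hx
      have hd : HasDerivAt (fun x : ℝ => a * Real.sinh x - x * Real.sinh a)
          (0 * Real.sinh x + a * Real.cosh x - (1 * Real.sinh a + x * 0)) x :=
        ((hasDerivAt_const x a).mul (Real.hasDerivAt_sinh x)).sub
          ((hasDerivAt_id x).mul (hasDerivAt_const x (Real.sinh a)))
      rw [hd.deriv]
      have h1 : Real.sinh a < a * Real.cosh a := sinh_lt_mul_cosh ha
      have h2 : Real.cosh a < Real.cosh x := by
        rw [Real.cosh_lt_cosh]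
        rw [abs_of_pos ha, abs_of_pos (ha.trans hx)]
        exact hx
      nlinarith
  have := key (le_refl a) hab.le hab
  simp only [mul_comm] at this ⊢
  nlinarith
noncomputable def etaD (θ₀ : ℝ) (s : ℝ) : ℝ :=
  ((π - 2*θ₀) * Real.cosh (s*(π - 2*θ₀)) * (2 * Real.sinh (s*π)) -
    Real.sinh (s*(π - 2*θ₀)) * (2*(π * Real.cosh (s*π)))) / (2 * Real.sinh (s*π))^2

lemma eta_hasDerivAt (θ₀ : ℝ) {s : ℝ} (hs : s ≠ 0) :
    HasDerivAt (eta θ₀) (etaD θ₀ s) s := by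
  have hsπ : s * π ≠ 0 := mul_ne_zero hs Real.pi_ne_zero
  have hden : 2 * Real.sinh (s*π) ≠ 0 := by
    simp [Real.sinh_ne_zero, hsπ]
  have hnum : HasDerivAt (fun x : ℝ => Real.sinh (x*(π - 2*θ₀)))
      ((π - 2*θ₀) * Real.cosh (s*(π - 2*θ₀))) s := by
    have := (Real.hasDerivAt_sinh (s*(π - 2*θ₀))).comp s
      ((hasDerivAt_id s).mul_const (π - 2*θ₀))
    simpa [mul_comm, Function.comp_def] using this
  have hden' : HasDerivAt (fun x : ℝ => 2 * Real.sinh (x*π))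
      (2 * (π * Real.cosh (s*π))) s := by
    have := (Real.hasDerivAt_sinh (s*π)).comp s ((hasDerivAt_id s).mul_const π)
    exact (this.const_mul 2).congr_deriv (by ring)
  have hq := hnum.div hden' hden
  apply hq.congr_of_eventuallyEq
  filter_upwards [eventually_ne_nhds hs] with x hx
  simp [eta, hx]

lemma etaD_neg (θ₀ : ℝ) (h0 : 0 < θ₀) (h1 : θ₀ < π/2) {s : ℝ} (hs : 0 < s) :
    etaD θ₀ s < 0 := by
  set c := π - 2*θ₀ with hc
  have hπ := Real.pi_pos
  have hcpos : 0 < c := by simp only [hc]; linarith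
  have hclt : c < π := by simp only [hc]; linarith
  have ha : (0:ℝ) < s * (π - c) := by
    have : 0 < π - c := by linarith
    positivity
  have hab : s * (π - c) < s * (π + c) := by nlinarith
  have hkey := mul_sinh_lt ha hab
  have hN : (π - 2*θ₀) * Real.cosh (s*(π - 2*θ₀)) * (2 * Real.sinh (s*π)) -
      Real.sinh (s*(π - 2*θ₀)) * (2*(π * Real.cosh (s*π)))
      = (π + c) * Real.sinh (s*(π - c)) - (π - c) * Real.sinh (s*(π + c)) := by
    rw [show s*(π - c) = s*π - s*c by ring, show s*(π + c) = s*c + s*π by ring,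
      Real.sinh_sub, Real.sinh_add]
    simp only [hc]
    ring
  have hNneg : (π - 2*θ₀) * Real.cosh (s*(π - 2*θ₀)) * (2 * Real.sinh (s*π)) -
      Real.sinh (s*(π - 2*θ₀)) * (2*(π * Real.cosh (s*π))) < 0 := by
    rw [hN]; nlinarith
  have hden : (0:ℝ) < (2 * Real.sinh (s*π))^2 := by
    have : Real.sinh (s*π) ≠ 0 := Real.sinh_ne_zero.2 (by positivity)
    positivity
  exact div_neg_of_neg_of_pos hNneg hden

lemma eta_strictAntiOn (θ₀ : ℝ) (h0 : 0 < θ₀) (h1 : θ₀ < π/2) :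
    StrictAntiOn (eta θ₀) (Ioi 0) := by
  apply strictAntiOn_of_deriv_neg (convex_Ioi 0)
  · intro x hx
    exact ((eta_hasDerivAt θ₀ (ne_of_gt hx)).continuousAt).continuousWithinAt
  · intro x hx
    rw [interior_Ioi] at hx
    rw [(eta_hasDerivAt θ₀ (ne_of_gt hx)).deriv]
    exact etaD_neg θ₀ h0 h1 hx

lemma eta_zero (θ₀ : ℝ) : eta θ₀ 0 = 1/2 - θ₀/π := by simp [eta]

section sigma
variable {θ₀ : ℝ} (h0 : 0 < θ₀) (h1 : θ₀ < π/2) {σ : ℝ → ℝ}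
  (hσ : ∀ t : ℝ, 0 < t → t ≤ 1 / 2 - θ₀ / π → 0 ≤ σ t ∧ eta θ₀ (σ t) = t)

include h0 h1 hσ

lemma sigma_pos {t : ℝ} (ht : 0 < t) (ht' : t < 1/2 - θ₀/π) : 0 < σ t := by
  obtain ⟨h1', h2'⟩ := hσ t ht ht'.le
  rcases h1'.lt_or_eq with h | h
  · exact h
  · exfalso; rw [← h, eta_zero] at h2'; linarith

lemma sigma_continuousAt {t : ℝ} (ht : 0 < t) (ht' : t < 1/2 - θ₀/π) :
    ContinuousAt σ t := by
  have hanti := eta_strictAntiOn θ₀ h0 h1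
  rw [Metric.continuousAt_iff]
  intro ε hε
  set s0 := σ t with hs0
  have hs0pos : 0 < s0 := sigma_pos h0 h1 hσ ht ht'
  have hetat : eta θ₀ s0 = t := (hσ t ht ht'.le).2
  set ε' := min ε (s0/2) with hε'
  have hε'pos : 0 < ε' := lt_min hε (by linarith)
  have hε'le : ε' ≤ ε := min_le_left _ _
  have hε's0 : ε' ≤ s0/2 := min_le_right _ _
  have h1mem : s0 - ε' ∈ Ioi (0:ℝ) := by simp only [mem_Ioi]; linarith
  have h2mem : s0 + ε' ∈ Ioi (0:ℝ) := by simp only [mem_Ioi]; linarith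
  have hs0mem : s0 ∈ Ioi (0:ℝ) := hs0pos
  have hlt1 : eta θ₀ (s0 + ε') < t := by
    rw [← hetat]; exact hanti hs0mem h2mem (by linarith)
  have hlt2 : t < eta θ₀ (s0 - ε') := by
    rw [← hetat]; exact hanti h1mem hs0mem (by linarith)
  refine ⟨min (min (t - eta θ₀ (s0 + ε')) (eta θ₀ (s0 - ε') - t))
      (min ((1/2 - θ₀/π) - t) t), ?_, ?_⟩
  · apply lt_min (lt_min (by linarith) (by linarith)) (lt_min (by linarith) ht)
  · intro u hu
    rw [Real.dist_eq, abs_lt] at hu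
    obtain ⟨hul, hur⟩ := hu
    have hu1 : 0 < u := by
      have := min_le_right (min (t - eta θ₀ (s0 + ε')) (eta θ₀ (s0 - ε') - t))
        (min ((1/2 - θ₀/π) - t) t)
      have := min_le_right ((1/2 - θ₀/π) - t) t
      linarith
    have hu2 : u < 1/2 - θ₀/π := by
      have := min_le_right (min (t - eta θ₀ (s0 + ε')) (eta θ₀ (s0 - ε') - t))
        (min ((1/2 - θ₀/π) - t) t)
      have := min_le_left ((1/2 - θ₀/π) - t) t
      linarith
    have hmin1 : t - eta θ₀ (s0 + ε') ≥ min (min (t - eta θ₀ (s0 + ε')) (eta θ₀ (s0 - ε') - t))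
        (min ((1/2 - θ₀/π) - t) t) :=
      le_trans (min_le_left _ _) (min_le_left _ _)
    have hmin2 : eta θ₀ (s0 - ε') - t ≥ min (min (t - eta θ₀ (s0 + ε')) (eta θ₀ (s0 - ε') - t))
        (min ((1/2 - θ₀/π) - t) t) :=
      le_trans (min_le_left _ _) (min_le_right _ _)
    obtain ⟨hσu0, hσuη⟩ := hσ u hu1 hu2.le
    have hσupos : 0 < σ u := sigma_pos h0 h1 hσ hu1 hu2
    rw [Real.dist_eq, abs_lt]
    constructor
    · -- σ u - s0 > -ε : show σ u > s0 - ε'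
      by_contra hcon
      push_neg at hcon
      have hle : σ u ≤ s0 - ε' := by
        by_contra hc2
        push_neg at hc2
        -- σ u > s0 - ε' and σ u - s0 ≤ -ε ≤ -ε' contradiction
        have : σ u ≤ s0 - ε := by linarith
        linarith
      have : eta θ₀ (s0 - ε') ≤ eta θ₀ (σ u) :=
        hanti.antitoneOn (by exact hσupos) h1mem hle
      rw [hσuη] at this
      linarith
    · by_contra hcon
      push_neg at hcon
      have hle : s0 + ε' ≤ σ u := by linarith
      have : eta θ₀ (σ u) ≤ eta θ₀ (s0 + ε') :=
        hanti.antitoneOn h2mem (by exact hσupos) hle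
      rw [hσuη] at this
      linarith

lemma sigma_hasDerivAt {t : ℝ} (ht : 0 < t) (ht' : t < 1/2 - θ₀/π) :
    HasDerivAt σ (etaD θ₀ (σ t))⁻¹ t := by
  have hs0pos : 0 < σ t := sigma_pos h0 h1 hσ ht ht'
  refine HasDerivAt.of_local_left_inverse (sigma_continuousAt h0 h1 hσ ht ht')
    (eta_hasDerivAt θ₀ (ne_of_gt hs0pos)) (ne_of_lt (etaD_neg θ₀ h0 h1 hs0pos)) ?_
  have : Ioo (0:ℝ) (1/2 - θ₀/π) ∈ 𝓝 t := isOpen_Ioo.mem_nhds ⟨ht, ht'⟩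
  filter_upwards [this] with u hu
  exact (hσ u hu.1 hu.2.le).2

end sigma
lemma mul_sinh_pos' {s a : ℝ} (hs : s ≠ 0) (ha : 0 < a) : 0 < s * Real.sinh (s * a) := by
  rcases hs.lt_or_gt with h | h
  · have : s * a < 0 := mul_neg_of_neg_of_pos h ha
    exact mul_pos_of_neg_of_neg h (Real.sinh_neg_iff.2 this)
  · exact mul_pos h (Real.sinh_pos_iff.2 (mul_pos h ha))

lemma mul_sinh_nonneg {s a : ℝ} (ha : 0 < a) : 0 ≤ Real.sinh (s * a) * Real.sinh (s * π) := by
  have hπ := Real.pi_pos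
  rcases lt_trichotomy s 0 with h | h | h
  · exact le_of_lt (mul_pos_of_neg_of_neg
      (Real.sinh_neg_iff.2 (mul_neg_of_neg_of_pos h ha))
      (Real.sinh_neg_iff.2 (mul_neg_of_neg_of_pos h hπ)))
  · simp [h]
  · exact le_of_lt (mul_pos (Real.sinh_pos_iff.2 (mul_pos h ha))
      (Real.sinh_pos_iff.2 (mul_pos h hπ)))

lemma p1_nonneg {θ₀ : ℝ} (h0 : 0 < θ₀) (h1 : θ₀ < π/2) (s : ℝ) : 0 ≤ p1 θ₀ s := by
  have hπ := Real.pi_pos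
  unfold p1
  split_ifs with h
  · have : 0 < π - θ₀ := by linarith
    positivity
  · rcases (lt_trichotomy s 0) with hs | hs | hs
    · apply div_nonneg
      · exact le_of_lt (mul_pos_of_neg_of_neg
          (Real.sinh_neg_iff.2 (mul_neg_of_neg_of_pos hs h0))
          (Real.sinh_neg_iff.2 (mul_neg_of_neg_of_pos hs (by linarith))))
      · exact le_of_lt (mul_sinh_pos' h hπ)
    · exact absurd hs h
    · apply div_nonneg
      · exact le_of_lt (mul_pos (Real.sinh_pos_iff.2 (mul_pos hs h0))
          (Real.sinh_pos_iff.2 (mul_pos hs (by linarith))))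
      · exact le_of_lt (mul_sinh_pos' h hπ)

lemma p2_nonneg {θ₀ : ℝ} (s : ℝ) : 0 ≤ p2 θ₀ s := by
  have hπ := Real.pi_pos
  unfold p2
  by_cases h : s = 0
  · simp [h]
  · apply div_nonneg (le_of_lt (mul_pos (Real.cosh_pos _) (Real.cosh_pos _)))
      (le_of_lt (mul_sinh_pos' h hπ))

lemma p1_even (θ₀ s : ℝ) : p1 θ₀ (-s) = p1 θ₀ s := by
  by_cases h : s = 0
  · simp [h]
  · have h' : -s ≠ 0 := neg_ne_zero.2 h
    simp only [p1, if_neg h, if_neg h']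
    rw [show -s * θ₀ = -(s * θ₀) by ring, show -s * (π - θ₀) = -(s * (π - θ₀)) by ring,
      show -s * π = -(s * π) by ring, Real.sinh_neg, Real.sinh_neg, Real.sinh_neg]
    ring

lemma p2_even (θ₀ s : ℝ) : p2 θ₀ (-s) = p2 θ₀ s := by
  simp only [p2]
  rw [show -s * θ₀ = -(s * θ₀) by ring, show -s * (π - θ₀) = -(s * (π - θ₀)) by ring,
    show -s * π = -(s * π) by ring, Real.cosh_neg, Real.cosh_neg, Real.sinh_neg]
  ring

lemma p1_measurable (θ₀ : ℝ) : Measurable (p1 θ₀) := by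
  unfold p1
  exact Measurable.ite (measurableSet_eq) measurable_const (by fun_prop)

lemma p2_measurable (θ₀ : ℝ) : Measurable (p2 θ₀) := by
  unfold p2; fun_prop

lemma p1_continuousAt (θ₀ : ℝ) {s : ℝ} (hs : s ≠ 0) : ContinuousAt (p1 θ₀) s := by
  have hden : s * Real.sinh (s * π) ≠ 0 :=
    mul_ne_zero hs (Real.sinh_ne_zero.2 (mul_ne_zero hs Real.pi_ne_zero))
  have hc : ContinuousAt
      (fun x => Real.sinh (x * θ₀) * Real.sinh (x * (π - θ₀)) / (x * Real.sinh (x * π))) s :=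
    ContinuousAt.div (by fun_prop) (by fun_prop) hden
  apply hc.congr
  filter_upwards [eventually_ne_nhds hs] with x hx
  simp [p1, hx]

lemma p2_continuousAt (θ₀ : ℝ) {s : ℝ} (hs : s ≠ 0) : ContinuousAt (p2 θ₀) s := by
  have hden : s * Real.sinh (s * π) ≠ 0 :=
    mul_ne_zero hs (Real.sinh_ne_zero.2 (mul_ne_zero hs Real.pi_ne_zero))
  exact ContinuousAt.div (by fun_prop) (by fun_prop) hden

lemma integrable_weighted (p : ℝ → ℝ) (hp : Measurable p) (hpnn : ∀ s, 0 ≤ p s)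
    (f g : ℝ → ℂ)
    (hf : MemLp f 2 ((volume : Measure ℝ).withDensity fun s => ENNReal.ofReal (p s)))
    (hg : MemLp g 2 ((volume : Measure ℝ).withDensity fun s => ENNReal.ofReal (p s))) :
    Integrable (fun s => (p s : ℂ) * f s * starRingEnd ℂ (g s)) (volume : Measure ℝ) := by
  set μ := (volume : Measure ℝ).withDensity fun s => ENNReal.ofReal (p s) with hμ
  have hgc : MeasureTheory.MemLp (fun s => starRingEnd ℂ (g s)) 2 μ := by
    have := (Complex.conjCLE.toContinuousLinearMap).comp_memLp' hg
    simpa [Function.comp_def] using this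
  have hmul : MeasureTheory.MemLp (f • fun s => starRingEnd ℂ (g s)) 1 μ :=
    hgc.smul hf (hpqr := ⟨by norm_num [ENNReal.inv_two_add_inv_two]⟩)
  have hint : Integrable (fun s => f s * starRingEnd ℂ (g s)) μ := by
    have := MeasureTheory.memLp_one_iff_integrable.mp hmul
    simpa [Pi.smul_apply, smul_eq_mul, Pi.mul_def] using this
  have hmeas : Measurable (fun s => ENNReal.ofReal (p s)) := ENNReal.measurable_ofReal.comp hp
  have hlt : ∀ᵐ x ∂(volume : Measure ℝ), ENNReal.ofReal (p x) < ⊤ :=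
    Eventually.of_forall (fun x => ENNReal.ofReal_lt_top)
  have h2 := (integrable_withDensity_iff_integrable_smul' hmeas hlt).1 hint
  have heq : (fun x => (ENNReal.ofReal (p x)).toReal • (f x * starRingEnd ℂ (g x)))
      = fun s => (p s : ℂ) * f s * starRingEnd ℂ (g s) := by
    funext x
    rw [ENNReal.toReal_ofReal (hpnn x)]
    rw [Complex.real_smul]
    ring
  rwa [heq] at h2

lemma Phi_hasDerivAt (h : ℝ → ℂ) (hint : Integrable h volume) {s0 : ℝ}
    (hc1 : ContinuousAt h s0) (hc2 : ContinuousAt h (-s0)) :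
    HasDerivAt (fun a => (∫ x in (0:ℝ)..a, h x) - ∫ x in (0:ℝ)..(-a), h x)
      (h s0 + h (-s0)) s0 := by
  have hF1 : HasDerivAt (fun a => ∫ x in (0:ℝ)..a, h x) (h s0) s0 :=
    intervalIntegral.integral_hasDerivAt_right hint.intervalIntegrable
      hint.aestronglyMeasurable.stronglyMeasurableAtFilter hc1
  have base : HasDerivAt (fun y => ∫ x in (0:ℝ)..y, h x) (h (-s0)) (-s0) :=
    intervalIntegral.integral_hasDerivAt_right hint.intervalIntegrable
      hint.aestronglyMeasurable.stronglyMeasurableAtFilter hc2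
  have hF2 : HasDerivAt (fun a : ℝ => ∫ x in (0:ℝ)..(-a), h x) (-(h (-s0))) s0 := by
    have := HasDerivAt.scomp_of_eq (x := s0) (hg := base) (hh := hasDerivAt_neg' s0) (hy := rfl)
    simpa [Function.comp_def] using this
  have := hF1.sub hF2
  convert this using 1
  · rfl
  · rfl
  ring

lemma Ioc_integral_eq (h : ℝ → ℂ) (hint : Integrable h volume) {a : ℝ} (ha : 0 ≤ a) :
    ∫ x in Ioc (-a) a, h x = (∫ x in (0:ℝ)..a, h x) - ∫ x in (0:ℝ)..(-a), h x := by
  rw [← intervalIntegral.integral_of_le (by linarith : -a ≤ a),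
    ← intervalIntegral.integral_add_adjacent_intervals
      (hint.intervalIntegrable (a := -a) (b := 0)) (hint.intervalIntegrable (a := 0) (b := a)),
    intervalIntegral.integral_symm]
  ring

/-- absolute continuity of the spectral measure: for `f, g ∈ W*` with
continuous components, the function `G(t) = ⟨f, E_t[g]⟩_{W*}` (written out explicitly from
the definition of the spectral family `E_t`, with the paper's inner product
`⟨φ,ψ⟩ = (1/2)∫ p φ conj(ψ)`) is differentiable at every `t ∈ (−b,0) ∪ (0,b)` with
`G'(t) = p₁(s)/(2|η'(s)|)·[f₁(s)conj(g₁(s)) + f₁(−s)conj(g₁(−s))]`, `s = σ(t)`, for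
`t ∈ (0,b)`, and `G'(t) = p₂(s)/(2|η'(s)|)·[f₂(s)conj(g₂(s)) + f₂(−s)conj(g₂(−s))]`,
`s = σ(−t)`, for `t ∈ (−b,0)`. Here `σ` inverts `η|_{[0,∞)}` and `b = 1/2 − θ₀/π`. -/
theorem statement14 (θ₀ : ℝ) (h0 : 0 < θ₀) (h1 : θ₀ < π / 2) (σ : ℝ → ℝ)
    (hσ : ∀ t : ℝ, 0 < t → t ≤ 1 / 2 - θ₀ / π → 0 ≤ σ t ∧ eta θ₀ (σ t) = t)
    (f₁ f₂ g₁ g₂ : ℝ → ℂ)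
    (hf₁c : Continuous f₁) (hf₂c : Continuous f₂)
    (hg₁c : Continuous g₁) (hg₂c : Continuous g₂)
    (hf₁ : MemLp f₁ 2 (mu1 θ₀)) (hf₂ : MemLp f₂ 2 (mu2 θ₀))
    (hg₁ : MemLp g₁ 2 (mu1 θ₀)) (hg₂ : MemLp g₂ 2 (mu2 θ₀))
    (G : ℝ → ℂ)
    (hG : ∀ t : ℝ, G t =
      if 0 < t then
        (1 / 2) * (∫ s in (Set.Ioc (-(σ t)) (σ t))ᶜ,
            (p1 θ₀ s : ℂ) * f₁ s * starRingEnd ℂ (g₁ s))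
          + (1 / 2) * ∫ s, (p2 θ₀ s : ℂ) * f₂ s * starRingEnd ℂ (g₂ s)
      else if t < 0 then
        (1 / 2) * ∫ s in Set.Ioc (-(σ (-t))) (σ (-t)),
            (p2 θ₀ s : ℂ) * f₂ s * starRingEnd ℂ (g₂ s)
      else (1 / 2) * ∫ s, (p2 θ₀ s : ℂ) * f₂ s * starRingEnd ℂ (g₂ s)) :
    (∀ t : ℝ, 0 < t → t < 1 / 2 - θ₀ / π →
      HasDerivAt G
        (((p1 θ₀ (σ t) / (2 * |deriv (eta θ₀) (σ t)|) : ℝ) : ℂ) *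
          (f₁ (σ t) * starRingEnd ℂ (g₁ (σ t))
            + f₁ (-(σ t)) * starRingEnd ℂ (g₁ (-(σ t))))) t) ∧
    (∀ t : ℝ, -(1 / 2 - θ₀ / π) < t → t < 0 →
      HasDerivAt G
        (((p2 θ₀ (σ (-t)) / (2 * |deriv (eta θ₀) (σ (-t))|) : ℝ) : ℂ) *
          (f₂ (σ (-t)) * starRingEnd ℂ (g₂ (σ (-t)))
            + f₂ (-(σ (-t))) * starRingEnd ℂ (g₂ (-(σ (-t)))))) t) := by
  have hπ := Real.pi_pos
  set h1f : ℝ → ℂ := fun s => (p1 θ₀ s : ℂ) * f₁ s * starRingEnd ℂ (g₁ s) with hh1f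
  set h2f : ℝ → ℂ := fun s => (p2 θ₀ s : ℂ) * f₂ s * starRingEnd ℂ (g₂ s) with hh2f
  have hint1 : Integrable h1f volume :=
    integrable_weighted (p1 θ₀) (p1_measurable θ₀) (p1_nonneg h0 h1) f₁ g₁ hf₁ hg₁
  have hint2 : Integrable h2f volume :=
    integrable_weighted (p2 θ₀) (p2_measurable θ₀) (fun s => p2_nonneg s) f₂ g₂ hf₂ hg₂
  have hcont1 : ∀ x : ℝ, x ≠ 0 → ContinuousAt h1f x := fun x hx =>
    ((Complex.continuous_ofReal.continuousAt.comp (p1_continuousAt θ₀ hx)).mul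
      hf₁c.continuousAt).mul ((Complex.continuous_conj.comp hg₁c).continuousAt)
  have hcont2 : ∀ x : ℝ, x ≠ 0 → ContinuousAt h2f x := fun x hx =>
    ((Complex.continuous_ofReal.continuousAt.comp (p2_continuousAt θ₀ hx)).mul
      hf₂c.continuousAt).mul ((Complex.continuous_conj.comp hg₂c).continuousAt)
  constructor
  · -- positive case
    intro t ht ht'
    have hs0pos : 0 < σ t := sigma_pos h0 h1 hσ ht ht'
    have hσD : HasDerivAt σ (etaD θ₀ (σ t))⁻¹ t := sigma_hasDerivAt h0 h1 hσ ht ht'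
    have hDneg : etaD θ₀ (σ t) < 0 := etaD_neg θ₀ h0 h1 hs0pos
    have hD0 : etaD θ₀ (σ t) ≠ 0 := ne_of_lt hDneg
    have hderiv_eta : deriv (eta θ₀) (σ t) = etaD θ₀ (σ t) :=
      (eta_hasDerivAt θ₀ (ne_of_gt hs0pos)).deriv
    have hΦ : HasDerivAt (fun a => (∫ x in (0:ℝ)..a, h1f x) - ∫ x in (0:ℝ)..(-a), h1f x)
        (h1f (σ t) + h1f (-(σ t))) (σ t) :=
      Phi_hasDerivAt h1f hint1 (hcont1 _ hs0pos.ne') (hcont1 _ (neg_ne_zero.2 hs0pos.ne'))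
    have hchain := HasDerivAt.scomp_of_eq (x := t) (hg := hΦ) (hh := hσD) (hy := rfl)
    have hΨ : HasDerivAt (fun u => (1/2 : ℂ) * ((∫ x, h1f x) -
          ((∫ x in (0:ℝ)..(σ u), h1f x) - ∫ x in (0:ℝ)..(-(σ u)), h1f x))
          + (1/2 : ℂ) * ∫ s, h2f s)
        ((1/2 : ℂ) * (0 - (etaD θ₀ (σ t))⁻¹ • (h1f (σ t) + h1f (-(σ t))))) t :=
      (((hasDerivAt_const t _).sub hchain).const_mul (1/2 : ℂ)).add_const _
    have hev : G =ᶠ[𝓝 t] fun u => (1/2 : ℂ) * ((∫ x, h1f x) -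
          ((∫ x in (0:ℝ)..(σ u), h1f x) - ∫ x in (0:ℝ)..(-(σ u)), h1f x))
          + (1/2 : ℂ) * ∫ s, h2f s := by
      filter_upwards [isOpen_Ioo.mem_nhds (show t ∈ Ioo 0 (1/2 - θ₀/π) from ⟨ht, ht'⟩)]
        with u hu
      rw [hG u, if_pos hu.1]
      have hσu : (0:ℝ) ≤ σ u := (hσ u hu.1 hu.2.le).1
      have hcompl : ∫ s in (Set.Ioc (-(σ u)) (σ u))ᶜ, h1f s
          = (∫ x, h1f x) - ∫ s in Set.Ioc (-(σ u)) (σ u), h1f s := by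
        rw [eq_sub_iff_add_eq, add_comm]
        exact integral_add_compl measurableSet_Ioc hint1
      rw [hcompl, Ioc_integral_eq h1f hint1 hσu]
    have hfinal := hΨ.congr_of_eventuallyEq hev
    convert hfinal using 1
    · rfl
    have hsum : h1f (σ t) + h1f (-(σ t))
        = (p1 θ₀ (σ t) : ℂ) * (f₁ (σ t) * starRingEnd ℂ (g₁ (σ t))
          + f₁ (-(σ t)) * starRingEnd ℂ (g₁ (-(σ t)))) := by
      simp only [hh1f, p1_even]; ring
    rw [hsum, hderiv_eta, abs_of_neg hDneg, Complex.real_smul]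
    have hD0' : ((etaD θ₀ (σ t) : ℝ) : ℂ) ≠ 0 := Complex.ofReal_ne_zero.2 hD0
    push_cast
    field_simp
    ring
  · -- negative case
    intro t ht ht'
    have hmt : 0 < -t := neg_pos.2 ht'
    have hmt' : -t < 1/2 - θ₀/π := by linarith
    have hs0pos : 0 < σ (-t) := sigma_pos h0 h1 hσ hmt hmt'
    have hσD : HasDerivAt σ (etaD θ₀ (σ (-t)))⁻¹ (-t) := sigma_hasDerivAt h0 h1 hσ hmt hmt'
    have hDneg : etaD θ₀ (σ (-t)) < 0 := etaD_neg θ₀ h0 h1 hs0pos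
    have hD0 : etaD θ₀ (σ (-t)) ≠ 0 := ne_of_lt hDneg
    have hderiv_eta : deriv (eta θ₀) (σ (-t)) = etaD θ₀ (σ (-t)) :=
      (eta_hasDerivAt θ₀ (ne_of_gt hs0pos)).deriv
    have hσneg : HasDerivAt (fun u : ℝ => σ (-u)) ((-1 : ℝ) • (etaD θ₀ (σ (-t)))⁻¹) t := by
      have := HasDerivAt.scomp_of_eq (x := t) (hg := hσD) (hh := hasDerivAt_neg' t) (hy := rfl)
      simpa [Function.comp_def] using this
    have hΦ : HasDerivAt (fun a => (∫ x in (0:ℝ)..a, h2f x) - ∫ x in (0:ℝ)..(-a), h2f x)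
        (h2f (σ (-t)) + h2f (-(σ (-t)))) (σ (-t)) :=
      Phi_hasDerivAt h2f hint2 (hcont2 _ hs0pos.ne') (hcont2 _ (neg_ne_zero.2 hs0pos.ne'))
    have hchain := HasDerivAt.scomp_of_eq (x := t) (hg := hΦ) (hh := hσneg) (hy := rfl)
    have hΨ := hchain.const_mul (1/2 : ℂ)
    have hev : G =ᶠ[𝓝 t] fun u => (1/2 : ℂ) *
        ((∫ x in (0:ℝ)..(σ (-u)), h2f x) - ∫ x in (0:ℝ)..(-(σ (-u))), h2f x) := by
      filter_upwards [isOpen_Ioo.mem_nhds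
        (show t ∈ Ioo (-(1/2 - θ₀/π)) 0 from ⟨ht, ht'⟩)] with u hu
      have hu2 : (0:ℝ) < -u := neg_pos.2 hu.2
      have hu2' : -u ≤ 1/2 - θ₀/π := by
        have := hu.1; linarith
      rw [hG u, if_neg (not_lt.2 hu.2.le), if_pos hu.2]
      have hσu : (0:ℝ) ≤ σ (-u) := (hσ (-u) hu2 hu2').1
      rw [Ioc_integral_eq h2f hint2 hσu]
    have hfinal := hΨ.congr_of_eventuallyEq hev
    convert hfinal using 1
    · rfl
    have hsum : h2f (σ (-t)) + h2f (-(σ (-t)))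
        = (p2 θ₀ (σ (-t)) : ℂ) * (f₂ (σ (-t)) * starRingEnd ℂ (g₂ (σ (-t)))
          + f₂ (-(σ (-t))) * starRingEnd ℂ (g₂ (-(σ (-t))))) := by
      simp only [hh2f, p2_even]; ring
    rw [hderiv_eta, abs_of_neg hDneg]
    simp only [smul_eq_mul, Complex.real_smul]
    rw [hsum]
    have hD0' : ((etaD θ₀ (σ (-t)) : ℝ) : ℂ) ≠ 0 := Complex.ofReal_ne_zero.2 hD0
    push_cast
    field_simp
end
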